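/- (Caro–Wei) For every finite simple graph G = (V, E), the independence number satisfies α(G) ≥ Σ_{v ∈ V} 1/(d(v) + 1), where d(v) denotes the degree of v. -/

import Mathlib

/-- A finset of vertices is independent: no two of its vertices are adjacent. -/
def IsIndepSet {V : Type*} (G : SimpleGraph V) (A : Finset V) : Prop :=
  ∀ u ∈ A, ∀ v ∈ A, ¬ G.Adj u v

/-- The independence number of a finite graph. -/
noncomputable def indepNum {V : Type*} [Fintype V] (G : SimpleGraph V) : ℕ :=
  sSup {k | ∃ A : Finset V, IsIndepSet G A ∧ A.card = k}

/-- A pair `(A, B)` with `A ⊆ V`, `B ⊆ E` is feasible if every edge in `B`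
has at most one of its two endpoints in `A`. -/
def Feasible {V : Type*} (G : SimpleGraph V) (A : Finset V)
    (B : Finset (Sym2 V)) : Prop :=
  (∀ e ∈ B, e ∈ G.edgeSet) ∧ ∀ w z : V, s(w, z) ∈ B → ¬(w ∈ A ∧ z ∈ A)

lemma indep_bddAbove {V : Type*} [Fintype V] (G : SimpleGraph V) :
    BddAbove {k | ∃ A : Finset V, IsIndepSet G A ∧ A.card = k} := by
  refine ⟨Fintype.card V, ?_⟩
  rintro k ⟨B, _, rfl⟩
  exact B.card_le_univ

lemma indepSet_card_le {V : Type*} [Fintype V] (G : SimpleGraph V) (A : Finset V)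
    (h : IsIndepSet G A) : A.card ≤ indepNum G :=
  le_csSup (indep_bddAbove G) ⟨A, h, rfl⟩

lemma exists_indepSet_card {V : Type*} [Fintype V] (G : SimpleGraph V) :
    ∃ A : Finset V, IsIndepSet G A ∧ A.card = indepNum G := by
  have hne : ({k | ∃ A : Finset V, IsIndepSet G A ∧ A.card = k}).Nonempty :=
    ⟨0, ∅, by intro u hu; simp at hu, by simp⟩
  exact Nat.sSup_mem hne (indep_bddAbove G)

universe u

lemma caroWei_aux : ∀ n : ℕ, ∀ (V : Type u) [Fintype V] (G : SimpleGraph V)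
    [DecidableRel G.Adj], Fintype.card V = n →
    (∑ v : V, (1 : ℝ) / (G.degree v + 1)) ≤ indepNum G := by
  intro n
  induction n using Nat.strong_induction_on with
  | _ n ih =>
    intro V _ G _ hn
    classical
    rcases isEmpty_or_nonempty V with hV | hV
    · simp [Finset.univ_eq_empty]
    -- pick a vertex of minimum degree
    obtain ⟨v, -, hv⟩ := Finset.exists_min_image Finset.univ (fun u => G.degree u)
      Finset.univ_nonempty
    have hvmin : ∀ u : V, G.degree v ≤ G.degree u := fun u => hv u (Finset.mem_univ u)
    set S : Finset V := insert v (G.neighborFinset v) with hS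
    have hvS : v ∈ S := Finset.mem_insert_self _ _
    have hScard : S.card = G.degree v + 1 := by
      rw [hS, Finset.card_insert_of_notMem (G.notMem_neighborFinset_self v),
        G.card_neighborFinset_eq_degree]
    -- induced graph on the complement of the closed neighborhood
    let V' := {u : V // u ∉ S}
    let G' : SimpleGraph V' := SimpleGraph.comap Subtype.val G
    have _ : DecidableRel G'.Adj := fun a b => Classical.dec _
    have hcardlt : Fintype.card V' < n := by
      rw [← hn]
      exact Fintype.card_subtype_lt (x := v) (by simpa using hvS)
    have hIH := ih (Fintype.card V') hcardlt V' G' rfl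
    -- degrees don't increase
    have hdeg : ∀ u : V', G'.degree u ≤ G.degree u.1 := by
      intro u
      rw [← SimpleGraph.card_neighborFinset_eq_degree,
        ← SimpleGraph.card_neighborFinset_eq_degree]
      apply Finset.card_le_card_of_injOn (fun w => w.1)
      · intro w hw
        simp only [Finset.mem_coe, SimpleGraph.mem_neighborFinset] at hw ⊢
        exact hw
      · exact Subtype.val_injective.injOn
    have hterm : ∀ u : V', (1 : ℝ) / (G.degree u.1 + 1) ≤ 1 / (G'.degree u + 1) := by
      intro u
      apply one_div_le_one_div_of_le
      · positivity
      · have := hdeg u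
        have h' : (G'.degree u : ℝ) ≤ G.degree u.1 := Nat.cast_le.mpr (hdeg u)
        linarith
    -- split the sum
    have hsplit : (∑ w : V, (1 : ℝ) / (G.degree w + 1)) =
        (∑ w ∈ S, (1 : ℝ) / (G.degree w + 1)) +
        (∑ w ∈ Sᶜ, (1 : ℝ) / (G.degree w + 1)) :=
      (Finset.sum_add_sum_compl S _).symm
    have hcompl : (∑ w ∈ Sᶜ, (1 : ℝ) / (G.degree w + 1)) =
        ∑ u : V', (1 : ℝ) / (G.degree u.1 + 1) := by
      exact Finset.sum_subtype Sᶜ (fun x => Finset.mem_compl) _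
    have h2 : (∑ w ∈ Sᶜ, (1 : ℝ) / (G.degree w + 1)) ≤ indepNum G' := by
      rw [hcompl]
      calc (∑ u : V', (1 : ℝ) / (G.degree u.1 + 1))
          ≤ ∑ u : V', (1 : ℝ) / (G'.degree u + 1) := Finset.sum_le_sum fun u _ => hterm u
        _ ≤ indepNum G' := hIH
    have h1 : (∑ w ∈ S, (1 : ℝ) / (G.degree w + 1)) ≤ 1 := by
      have : ∀ w ∈ S, (1 : ℝ) / (G.degree w + 1) ≤ 1 / (G.degree v + 1) := by
        intro w _
        apply one_div_le_one_div_of_le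
        · positivity
        · exact_mod_cast Nat.add_le_add_right (hvmin w) 1
      calc (∑ w ∈ S, (1 : ℝ) / (G.degree w + 1))
          ≤ S.card • ((1 : ℝ) / (G.degree v + 1)) := Finset.sum_le_card_nsmul _ _ _ this
        _ = 1 := by
            rw [hScard, nsmul_eq_mul]
            have : ((G.degree v : ℝ) + 1) ≠ 0 := by positivity
            push_cast
            field_simp
    -- build a large independent set in G
    obtain ⟨A', hA', hAcard⟩ := exists_indepSet_card G'
    have hvim : v ∉ A'.map ⟨Subtype.val, Subtype.val_injective⟩ := by
      simp only [Finset.mem_map, Function.Embedding.coeFn_mk]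
      rintro ⟨u, -, h⟩
      exact u.2 (h ▸ hvS)
    have hAindep : IsIndepSet G (insert v (A'.map ⟨Subtype.val, Subtype.val_injective⟩)) := by
      intro x hx y hy hadj
      rw [Finset.mem_insert] at hx hy
      rcases hx with hxv | hx
      · rw [hxv] at hadj
        rcases hy with hyv | hy
        · rw [hyv] at hadj
          exact G.irrefl hadj
        · simp only [Finset.mem_map, Function.Embedding.coeFn_mk] at hy
          obtain ⟨u, -, rfl⟩ := hy
          exact u.2 (Finset.mem_insert_of_mem ((G.mem_neighborFinset v u.1).2 hadj))
      · rcases hy with hyv | hy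
        · rw [hyv] at hadj
          simp only [Finset.mem_map, Function.Embedding.coeFn_mk] at hx
          obtain ⟨u, -, rfl⟩ := hx
          exact u.2 (Finset.mem_insert_of_mem ((G.mem_neighborFinset v u.1).2 hadj.symm))
        · simp only [Finset.mem_map, Function.Embedding.coeFn_mk] at hx hy
          obtain ⟨a, ha, rfl⟩ := hx
          obtain ⟨b, hb, rfl⟩ := hy
          exact hA' a ha b hb hadj
    have hfinal : indepNum G' + 1 ≤ indepNum G := by
      have h := indepSet_card_le G _ hAindep
      rwa [Finset.card_insert_of_notMem hvim, Finset.card_map, hAcard] at h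
    have hfinalR : (indepNum G' : ℝ) + 1 ≤ indepNum G := by exact_mod_cast hfinal
    rw [hsplit]
    linarith

/-- Caro–Wei: α(G) ≥ Σ_v 1/(d(v) + 1). -/
theorem stmt_4 {V : Type*} [Fintype V] (G : SimpleGraph V)
    [DecidableRel G.Adj] :
    (∑ v : V, (1 : ℝ) / (G.degree v + 1)) ≤ indepNum G := by
  exact caroWei_aux (Fintype.card V) V G rfl
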